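/- Let G be a bipartite graph with parts A and B with girth at least 12 (no cycle of length < 12). Form a graph F on B by, for each a ∈ A, choosing a partition N(a) = S_a ∪ T_a and joining every vertex of S_a to every vertex of T_a. Then F contains no cycle of length 5. -/
import Mathlib

open SimpleGraph

private lemma cyc4' {V : Type*} {G : SimpleGraph V} {a b c d : V}
    (h1 : G.Adj a b) (h2 : G.Adj b c) (h3 : G.Adj c d) (h4 : G.Adj d a)
    (hnd : [a,b,c,d].Nodup) :
    ∃ (v : V) (w : G.Walk v v), w.IsCycle ∧ w.length = 4 := by
  refine ⟨a, Walk.cons h1 (Walk.cons h2 (Walk.cons h3 (Walk.cons h4 Walk.nil))), ?_, rfl⟩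
  simp_all [Walk.isCycle_def, Walk.isTrail_def, Sym2.eq, Sym2.rel_iff']
  aesop

private lemma cyc6' {V : Type*} {G : SimpleGraph V} {a b c d e f : V}
    (h1 : G.Adj a b) (h2 : G.Adj b c) (h3 : G.Adj c d) (h4 : G.Adj d e)
    (h5 : G.Adj e f) (h6 : G.Adj f a)
    (hnd : [a,b,c,d,e,f].Nodup) :
    ∃ (v : V) (w : G.Walk v v), w.IsCycle ∧ w.length = 6 := by
  refine ⟨a, Walk.cons h1 (Walk.cons h2 (Walk.cons h3 (Walk.cons h4 (Walk.cons h5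
    (Walk.cons h6 Walk.nil))))), ?_, rfl⟩
  simp_all [Walk.isCycle_def, Walk.isTrail_def, Sym2.eq, Sym2.rel_iff']
  aesop

private lemma cyc8' {V : Type*} {G : SimpleGraph V} {a b c d e f g h : V}
    (h1 : G.Adj a b) (h2 : G.Adj b c) (h3 : G.Adj c d) (h4 : G.Adj d e)
    (h5 : G.Adj e f) (h6 : G.Adj f g) (h7 : G.Adj g h) (h8 : G.Adj h a)
    (hnd : [a,b,c,d,e,f,g,h].Nodup) :
    ∃ (v : V) (w : G.Walk v v), w.IsCycle ∧ w.length = 8 := by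
  refine ⟨a, Walk.cons h1 (Walk.cons h2 (Walk.cons h3 (Walk.cons h4 (Walk.cons h5
    (Walk.cons h6 (Walk.cons h7 (Walk.cons h8 Walk.nil))))))), ?_, rfl⟩
  simp_all [Walk.isCycle_def, Walk.isTrail_def, Sym2.eq, Sym2.rel_iff']
  aesop

private lemma cyc10' {V : Type*} {G : SimpleGraph V} {a b c d e f g h i j : V}
    (h1 : G.Adj a b) (h2 : G.Adj b c) (h3 : G.Adj c d) (h4 : G.Adj d e)
    (h5 : G.Adj e f) (h6 : G.Adj f g) (h7 : G.Adj g h) (h8 : G.Adj h i)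
    (h9 : G.Adj i j) (h10 : G.Adj j a)
    (hnd : [a,b,c,d,e,f,g,h,i,j].Nodup) :
    ∃ (v : V) (w : G.Walk v v), w.IsCycle ∧ w.length = 10 := by
  refine ⟨a, Walk.cons h1 (Walk.cons h2 (Walk.cons h3 (Walk.cons h4 (Walk.cons h5
    (Walk.cons h6 (Walk.cons h7 (Walk.cons h8 (Walk.cons h9
    (Walk.cons h10 Walk.nil))))))))), ?_, rfl⟩
  simp_all [Walk.isCycle_def, Walk.isTrail_def, Sym2.eq, Sym2.rel_iff']
  aesop

/-- Two distinct vertices with two distinct common neighbours give a 4-cycle. -/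
private lemma L2' {V : Type*} {G : SimpleGraph V}
    (hg : ∀ (v : V) (w : G.Walk v v), w.IsCycle → 12 ≤ w.length)
    {b1 b2 a1 a2 : V}
    (e1 : G.Adj a1 b1) (e2 : G.Adj a1 b2) (e3 : G.Adj a2 b1) (e4 : G.Adj a2 b2)
    (hb : b1 ≠ b2) (ha : a1 ≠ a2) : False := by
  obtain ⟨v, w, hc, hl⟩ := cyc4' e1 e3.symm e4 e2.symm
    (by simp [e1.ne, e2.ne, e3.ne, e4.ne, ha, hb, e1.ne', e2.ne', e3.ne', e4.ne'])
  have := hg v w hc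
  omega

private lemma L3' {V : Type*} {G : SimpleGraph V} {A B : Set V}
    (hg : ∀ (v : V) (w : G.Walk v v), w.IsCycle → 12 ≤ w.length)
    (hne : ∀ x ∈ A, ∀ y ∈ B, x ≠ y)
    {b1 b2 b3 a1 a2 a3 : V}
    (ha1 : a1 ∈ A) (ha2 : a2 ∈ A) (ha3 : a3 ∈ A)
    (hb1 : b1 ∈ B) (hb2 : b2 ∈ B) (hb3 : b3 ∈ B)
    (e1 : G.Adj a1 b1) (e1' : G.Adj a1 b2)
    (e2 : G.Adj a2 b2) (e2' : G.Adj a2 b3)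
    (e3 : G.Adj a3 b3) (e3' : G.Adj a3 b1)
    (hb12 : b1 ≠ b2) (hb13 : b1 ≠ b3) (hb23 : b2 ≠ b3)
    (hna : ¬(a1 = a2 ∧ a2 = a3)) : False := by
  by_cases h12 : a1 = a2
  · have h13 : a1 ≠ a3 := fun h => hna ⟨h12, h12.symm.trans h⟩
    exact L2' hg e1 (h12 ▸ e2') e3' e3 hb13 h13
  by_cases h23 : a2 = a3
  · exact L2' hg e1 e1' (h23 ▸ e3') e2 hb12 h12
  by_cases h13 : a1 = a3
  · exact L2' hg e1' (h13 ▸ e3) e2 e2' hb23 h12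
  · obtain ⟨v, w, hc, hl⟩ := cyc6' e1' e2.symm e2' e3.symm e3' e1.symm
      (by simp [(hne a1 ha1 b2 hb2),
        (show a1 ≠ a2 from h12),
        (hne a1 ha1 b3 hb3),
        (show a1 ≠ a3 from h13),
        (hne a1 ha1 b1 hb1),
        (Ne.symm (hne a2 ha2 b2 hb2)),
        (show b2 ≠ b3 from hb23),
        (Ne.symm (hne a3 ha3 b2 hb2)),
        (show b2 ≠ b1 from Ne.symm hb12),
        (hne a2 ha2 b3 hb3),
        (show a2 ≠ a3 from h23),
        (hne a2 ha2 b1 hb1),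
        (Ne.symm (hne a3 ha3 b3 hb3)),
        (show b3 ≠ b1 from Ne.symm hb13),
        (hne a3 ha3 b1 hb1)])
    have := hg v w hc
    omega

private lemma L4' {V : Type*} {G : SimpleGraph V} {A B : Set V}
    (hg : ∀ (v : V) (w : G.Walk v v), w.IsCycle → 12 ≤ w.length)
    (hne : ∀ x ∈ A, ∀ y ∈ B, x ≠ y)
    {b1 b2 b3 b4 a1 a2 a3 a4 : V}
    (ha1 : a1 ∈ A) (ha2 : a2 ∈ A) (ha3 : a3 ∈ A) (ha4 : a4 ∈ A)
    (hb1 : b1 ∈ B) (hb2 : b2 ∈ B) (hb3 : b3 ∈ B) (hb4 : b4 ∈ B)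
    (e1 : G.Adj a1 b1) (e1' : G.Adj a1 b2)
    (e2 : G.Adj a2 b2) (e2' : G.Adj a2 b3)
    (e3 : G.Adj a3 b3) (e3' : G.Adj a3 b4)
    (e4 : G.Adj a4 b4) (e4' : G.Adj a4 b1)
    (hb12 : b1 ≠ b2) (hb13 : b1 ≠ b3) (hb14 : b1 ≠ b4)
    (hb23 : b2 ≠ b3) (hb24 : b2 ≠ b4) (hb34 : b3 ≠ b4)
    (hna : ¬(a1 = a2 ∧ a2 = a3 ∧ a3 = a4)) : False := by
  by_cases h12 : a1 = a2
  · exact L3' hg hne ha1 ha3 ha4 hb1 hb3 hb4 e1 (h12 ▸ e2') e3 e3' e4 e4'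
      hb13 hb14 hb34 (fun h => hna ⟨h12, h12.symm.trans h.1, h.2⟩)
  by_cases h23 : a2 = a3
  · exact L3' hg hne ha2 ha4 ha1 hb2 hb4 hb1 e2 (h23 ▸ e3') e4 e4' e1 e1'
      hb24 hb12.symm hb14.symm (fun h => hna ⟨(h.1.trans h.2).symm, h23, h23.symm.trans h.1⟩)
  by_cases h34 : a3 = a4
  · exact L3' hg hne ha3 ha1 ha2 hb3 hb1 hb2 e3 (h34 ▸ e4') e1 e1' e2 e2'
      hb13.symm hb23.symm hb12 (fun h => hna ⟨h.2, h.2.symm.trans h.1.symm, h34⟩)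
  by_cases h41 : a4 = a1
  · exact L3' hg hne ha4 ha2 ha3 hb4 hb2 hb3 e4 (h41 ▸ e1') e2 e2' e3 e3'
      hb24.symm hb34.symm hb23 (fun h => hna ⟨h41.symm.trans h.1, h.2, h.2.symm.trans h.1.symm⟩)
  by_cases h13 : a1 = a3
  · exact L2' hg e1' (h13 ▸ e3) e2 e2' hb23 h12
  by_cases h24 : a2 = a4
  · exact L2' hg e2' (h24 ▸ e4) e3 e3' hb34 h23
  · obtain ⟨v, w, hc, hl⟩ := cyc8' e1' e2.symm e2' e3.symm e3' e4.symm e4' e1.symm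
      (by simp [(hne a1 ha1 b2 hb2),
        (show a1 ≠ a2 from h12),
        (hne a1 ha1 b3 hb3),
        (show a1 ≠ a3 from h13),
        (hne a1 ha1 b4 hb4),
        (show a1 ≠ a4 from Ne.symm h41),
        (hne a1 ha1 b1 hb1),
        (Ne.symm (hne a2 ha2 b2 hb2)),
        (show b2 ≠ b3 from hb23),
        (Ne.symm (hne a3 ha3 b2 hb2)),
        (show b2 ≠ b4 from hb24),
        (Ne.symm (hne a4 ha4 b2 hb2)),
        (show b2 ≠ b1 from Ne.symm hb12),
        (hne a2 ha2 b3 hb3),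
        (show a2 ≠ a3 from h23),
        (hne a2 ha2 b4 hb4),
        (show a2 ≠ a4 from h24),
        (hne a2 ha2 b1 hb1),
        (Ne.symm (hne a3 ha3 b3 hb3)),
        (show b3 ≠ b4 from hb34),
        (Ne.symm (hne a4 ha4 b3 hb3)),
        (show b3 ≠ b1 from Ne.symm hb13),
        (hne a3 ha3 b4 hb4),
        (show a3 ≠ a4 from h34),
        (hne a3 ha3 b1 hb1),
        (Ne.symm (hne a4 ha4 b4 hb4)),
        (show b4 ≠ b1 from Ne.symm hb14),
        (hne a4 ha4 b1 hb1)])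
    have := hg v w hc
    omega

set_option maxHeartbeats 1000000 in
private lemma L5' {V : Type*} {G : SimpleGraph V} {A B : Set V}
    (hg : ∀ (v : V) (w : G.Walk v v), w.IsCycle → 12 ≤ w.length)
    (hne : ∀ x ∈ A, ∀ y ∈ B, x ≠ y)
    {b1 b2 b3 b4 b5 a1 a2 a3 a4 a5 : V}
    (ha1 : a1 ∈ A) (ha2 : a2 ∈ A) (ha3 : a3 ∈ A) (ha4 : a4 ∈ A) (ha5 : a5 ∈ A)
    (hb1 : b1 ∈ B) (hb2 : b2 ∈ B) (hb3 : b3 ∈ B) (hb4 : b4 ∈ B) (hb5 : b5 ∈ B)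
    (e1 : G.Adj a1 b1) (e1' : G.Adj a1 b2)
    (e2 : G.Adj a2 b2) (e2' : G.Adj a2 b3)
    (e3 : G.Adj a3 b3) (e3' : G.Adj a3 b4)
    (e4 : G.Adj a4 b4) (e4' : G.Adj a4 b5)
    (e5 : G.Adj a5 b5) (e5' : G.Adj a5 b1)
    (hb12 : b1 ≠ b2) (hb13 : b1 ≠ b3) (hb14 : b1 ≠ b4) (hb15 : b1 ≠ b5)
    (hb23 : b2 ≠ b3) (hb24 : b2 ≠ b4) (hb25 : b2 ≠ b5)
    (hb34 : b3 ≠ b4) (hb35 : b3 ≠ b5) (hb45 : b4 ≠ b5)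
    (hna : ¬(a1 = a2 ∧ a2 = a3 ∧ a3 = a4 ∧ a4 = a5)) : False := by
  by_cases h12 : a1 = a2
  · exact L4' hg hne ha1 ha3 ha4 ha5 hb1 hb3 hb4 hb5 e1 (h12 ▸ e2') e3 e3' e4 e4' e5 e5'
      hb13 hb14 hb15 hb34 hb35 hb45 (fun h => hna ⟨h12, h12.symm.trans h.1, h.2.1, h.2.2⟩)
  by_cases h23 : a2 = a3
  · exact L4' hg hne ha2 ha4 ha5 ha1 hb2 hb4 hb5 hb1 e2 (h23 ▸ e3') e4 e4' e5 e5' e1 e1'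
      hb24 hb25 hb12.symm hb45 hb14.symm hb15.symm
      (fun h => hna ⟨(h.1.trans (h.2.1.trans h.2.2)).symm, h23, h23.symm.trans h.1, h.2.1⟩)
  by_cases h34 : a3 = a4
  · exact L4' hg hne ha3 ha5 ha1 ha2 hb3 hb5 hb1 hb2 e3 (h34 ▸ e4') e5 e5' e1 e1' e2 e2'
      hb35 hb13.symm hb23.symm hb15.symm hb25.symm hb12
      (fun h => hna ⟨h.2.2, h.2.2.symm.trans (h.2.1.symm.trans h.1.symm), h34, h34.symm.trans h.1⟩)
  by_cases h45 : a4 = a5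
  · exact L4' hg hne ha4 ha1 ha2 ha3 hb4 hb1 hb2 hb3 e4 (h45 ▸ e5') e1 e1' e2 e2' e3 e3'
      hb14.symm hb24.symm hb34.symm hb12 hb13 hb23
      (fun h => hna ⟨h.2.1, h.2.2, h.2.2.symm.trans (h.2.1.symm.trans h.1.symm), h45⟩)
  by_cases h51 : a5 = a1
  · exact L4' hg hne ha5 ha2 ha3 ha4 hb5 hb2 hb3 hb4 e5 (h51 ▸ e1') e2 e2' e3 e3' e4 e4'
      hb25.symm hb35.symm hb45.symm hb23 hb24 hb34
      (fun h => hna ⟨h51.symm.trans h.1, h.2.1, h.2.2, h.2.2.symm.trans (h.2.1.symm.trans h.1.symm)⟩)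
  by_cases h13 : a1 = a3
  · exact L2' hg e1' (h13 ▸ e3) e2 e2' hb23 h12
  by_cases h24 : a2 = a4
  · exact L2' hg e2' (h24 ▸ e4) e3 e3' hb34 h23
  by_cases h35 : a3 = a5
  · exact L2' hg e3' (h35 ▸ e5) e4 e4' hb45 h34
  by_cases h41 : a4 = a1
  · exact L2' hg e4' (h41 ▸ e1) e5 e5' hb15.symm h45
  by_cases h52 : a5 = a2
  · exact L2' hg e5' (h52 ▸ e2) e1 e1' hb12 h51
  · obtain ⟨v, w, hc, hl⟩ := cyc10' e1' e2.symm e2' e3.symm e3' e4.symm e4' e5.symm e5' e1.symm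
      (by simp [(hne a1 ha1 b2 hb2),
        (show a1 ≠ a2 from h12),
        (hne a1 ha1 b3 hb3),
        (show a1 ≠ a3 from h13),
        (hne a1 ha1 b4 hb4),
        (show a1 ≠ a4 from Ne.symm h41),
        (hne a1 ha1 b5 hb5),
        (show a1 ≠ a5 from Ne.symm h51),
        (hne a1 ha1 b1 hb1),
        (Ne.symm (hne a2 ha2 b2 hb2)),
        (show b2 ≠ b3 from hb23),
        (Ne.symm (hne a3 ha3 b2 hb2)),
        (show b2 ≠ b4 from hb24),
        (Ne.symm (hne a4 ha4 b2 hb2)),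
        (show b2 ≠ b5 from hb25),
        (Ne.symm (hne a5 ha5 b2 hb2)),
        (show b2 ≠ b1 from Ne.symm hb12),
        (hne a2 ha2 b3 hb3),
        (show a2 ≠ a3 from h23),
        (hne a2 ha2 b4 hb4),
        (show a2 ≠ a4 from h24),
        (hne a2 ha2 b5 hb5),
        (show a2 ≠ a5 from Ne.symm h52),
        (hne a2 ha2 b1 hb1),
        (Ne.symm (hne a3 ha3 b3 hb3)),
        (show b3 ≠ b4 from hb34),
        (Ne.symm (hne a4 ha4 b3 hb3)),
        (show b3 ≠ b5 from hb35),
        (Ne.symm (hne a5 ha5 b3 hb3)),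
        (show b3 ≠ b1 from Ne.symm hb13),
        (hne a3 ha3 b4 hb4),
        (show a3 ≠ a4 from h34),
        (hne a3 ha3 b5 hb5),
        (show a3 ≠ a5 from h35),
        (hne a3 ha3 b1 hb1),
        (Ne.symm (hne a4 ha4 b4 hb4)),
        (show b4 ≠ b5 from hb45),
        (Ne.symm (hne a5 ha5 b4 hb4)),
        (show b4 ≠ b1 from Ne.symm hb14),
        (hne a4 ha4 b5 hb5),
        (show a4 ≠ a5 from h45),
        (hne a4 ha4 b1 hb1),
        (Ne.symm (hne a5 ha5 b5 hb5)),
        (show b5 ≠ b1 from Ne.symm hb15),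
        (hne a5 ha5 b1 hb1)])
    have := hg v w hc
    omega

set_option maxHeartbeats 1000000 in
/-- Random block construction: `G` is bipartite with parts `A`, `B` and girth at least 12.
For each `a ∈ A` the neighborhood `N(a)` is partitioned into `S a` and `T a`, and `F` is
the graph on `B` whose edges are all pairs joined through some `a` (one endpoint in `S a`,
the other in `T a`).  Then `F` contains no cycle of length 5. -/
theorem stmt_7 {V : Type*} (G : SimpleGraph V) (A B : Set V)
    (hpart : ∀ v, v ∈ A ∨ v ∈ B) (hdisj : Disjoint A B)
    (hbip : ∀ u v, G.Adj u v → (u ∈ A ∧ v ∈ B) ∨ (u ∈ B ∧ v ∈ A))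
    (hgirth : ∀ (v : V) (w : G.Walk v v), w.IsCycle → 12 ≤ w.length)
    (S T : V → Set V)
    (hST : ∀ a ∈ A, S a ∪ T a = {v | G.Adj a v} ∧ Disjoint (S a) (T a))
    (F : SimpleGraph V)
    (hF : ∀ b b', F.Adj b b' ↔
      ∃ a ∈ A, (b ∈ S a ∧ b' ∈ T a) ∨ (b ∈ T a ∧ b' ∈ S a)) :
    ¬ ∃ (v : V) (w : F.Walk v v), w.IsCycle ∧ w.length = 5 := by
  rintro ⟨b1, w, hc, hl⟩
  have hadj : ∀ a ∈ A, ∀ x, (x ∈ S a ∨ x ∈ T a) → G.Adj a x := by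
    intro a ha x hx
    have h := (hST a ha).1
    have hx' : x ∈ S a ∪ T a := hx
    rw [h] at hx'
    exact hx'
  have hAB : ∀ x, x ∈ A → x ∉ B := fun x hx => Set.disjoint_left.mp hdisj hx
  have hne : ∀ x ∈ A, ∀ y ∈ B, x ≠ y := fun x hx y hy h => hAB x hx (h ▸ hy)
  cases w with
  | nil => simp at hl
  | cons f1 w => cases w with
    | nil => simp at hl
    | cons f2 w => cases w with
      | nil => simp at hl
      | cons f3 w => cases w with
        | nil => simp at hl
        | cons f4 w => cases w with
          | nil => simp at hl
          | cons f5 w => cases w with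
            | cons f6 w => simp [SimpleGraph.Walk.length_cons] at hl
            | nil =>
              rename_i b2 b3 b4 b5
              -- support tail nodup
              have hnd := hc.support_nodup
              simp [SimpleGraph.Walk.support_cons] at hnd
              obtain ⟨⟨hb23, hb24, hb25, hb21⟩, ⟨hb34, hb35, hb31⟩, ⟨hb45, hb41⟩, hb51⟩ := hnd
              rw [hF] at f1 f2 f3 f4 f5
              obtain ⟨a1, hA1, hc1⟩ := f1
              obtain ⟨a2, hA2, hc2⟩ := f2
              obtain ⟨a3, hA3, hc3⟩ := f3
              obtain ⟨a4, hA4, hc4⟩ := f4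
              obtain ⟨a5, hA5, hc5⟩ := f5
              have e1 : G.Adj a1 b1 ∧ G.Adj a1 b2 := by
                rcases hc1 with ⟨h, h'⟩ | ⟨h, h'⟩
                · exact ⟨hadj _ hA1 _ (Or.inl h), hadj _ hA1 _ (Or.inr h')⟩
                · exact ⟨hadj _ hA1 _ (Or.inr h), hadj _ hA1 _ (Or.inl h')⟩
              have e2 : G.Adj a2 b2 ∧ G.Adj a2 b3 := by
                rcases hc2 with ⟨h, h'⟩ | ⟨h, h'⟩
                · exact ⟨hadj _ hA2 _ (Or.inl h), hadj _ hA2 _ (Or.inr h')⟩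
                · exact ⟨hadj _ hA2 _ (Or.inr h), hadj _ hA2 _ (Or.inl h')⟩
              have e3 : G.Adj a3 b3 ∧ G.Adj a3 b4 := by
                rcases hc3 with ⟨h, h'⟩ | ⟨h, h'⟩
                · exact ⟨hadj _ hA3 _ (Or.inl h), hadj _ hA3 _ (Or.inr h')⟩
                · exact ⟨hadj _ hA3 _ (Or.inr h), hadj _ hA3 _ (Or.inl h')⟩
              have e4 : G.Adj a4 b4 ∧ G.Adj a4 b5 := by
                rcases hc4 with ⟨h, h'⟩ | ⟨h, h'⟩
                · exact ⟨hadj _ hA4 _ (Or.inl h), hadj _ hA4 _ (Or.inr h')⟩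
                · exact ⟨hadj _ hA4 _ (Or.inr h), hadj _ hA4 _ (Or.inl h')⟩
              have e5 : G.Adj a5 b5 ∧ G.Adj a5 b1 := by
                rcases hc5 with ⟨h, h'⟩ | ⟨h, h'⟩
                · exact ⟨hadj _ hA5 _ (Or.inl h), hadj _ hA5 _ (Or.inr h')⟩
                · exact ⟨hadj _ hA5 _ (Or.inr h), hadj _ hA5 _ (Or.inl h')⟩
              have hBmem : ∀ a ∈ A, ∀ x, G.Adj a x → x ∈ B := by
                intro a ha x hx
                rcases hbip a x hx with ⟨_, h⟩ | ⟨h, _⟩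
                · exact h
                · exact absurd h (hAB a ha)
              have hB1 : b1 ∈ B := hBmem a1 hA1 b1 e1.1
              have hB2 : b2 ∈ B := hBmem a1 hA1 b2 e1.2
              have hB3 : b3 ∈ B := hBmem a2 hA2 b3 e2.2
              have hB4 : b4 ∈ B := hBmem a3 hA3 b4 e3.2
              have hB5 : b5 ∈ B := hBmem a4 hA4 b5 e4.2
              by_cases hall : a1 = a2 ∧ a2 = a3 ∧ a3 = a4 ∧ a4 = a5
              · obtain ⟨q1, q2, q3, q4⟩ := hall
                subst q1; subst q2; subst q3; subst q4
                have hd := (hST a1 hA1).2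
                have dis : ∀ x, ¬(x ∈ S a1 ∧ x ∈ T a1) :=
                  fun x h => Set.disjoint_left.mp hd h.1 h.2
                have d1 := dis b1
                have d2 := dis b2
                have d3 := dis b3
                have d4 := dis b4
                have d5 := dis b5
                rcases hc1 with ⟨p1, q1⟩ | ⟨p1, q1⟩ <;>
                rcases hc2 with ⟨p2, q2⟩ | ⟨p2, q2⟩ <;>
                rcases hc3 with ⟨p3, q3⟩ | ⟨p3, q3⟩ <;>
                rcases hc4 with ⟨p4, q4⟩ | ⟨p4, q4⟩ <;>
                rcases hc5 with ⟨p5, q5⟩ | ⟨p5, q5⟩ <;>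
                first
                  | exact d1 ⟨p1, q5⟩
                  | exact d1 ⟨q5, p1⟩
                  | exact d2 ⟨p2, q1⟩
                  | exact d2 ⟨q1, p2⟩
                  | exact d3 ⟨p3, q2⟩
                  | exact d3 ⟨q2, p3⟩
                  | exact d4 ⟨p4, q3⟩
                  | exact d4 ⟨q3, p4⟩
                  | exact d5 ⟨p5, q4⟩
                  | exact d5 ⟨q4, p5⟩
              · exact L5' hgirth hne hA1 hA2 hA3 hA4 hA5 hB1 hB2 hB3 hB4 hB5
                  e1.1 e1.2 e2.1 e2.2 e3.1 e3.2 e4.1 e4.2 e5.1 e5.2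
                  (Ne.symm hb21) (Ne.symm hb31) (Ne.symm hb41) (Ne.symm hb51)
                  hb23 hb24 hb25 hb34 hb35 hb45 hall
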